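/- In a Gutkin (2k,k)-gon, all k main diagonals v_i v_{i+k} have equal length. -/

import Mathlib

open Real

/-- A Gutkin `(n,k)`-gon: a convex `n`-gon `v₀, …, v_{n−1}` (vertices in
strictly convex position) such that every `k`-diagonal `v_i v_{i+k}` makes the
same contact angle `α` with the polygon at both of its endpoints. -/
structure GutkinPolygon (n k : ℕ) where
  v : ZMod n → ℂ
  α : ℝ
  hk : 2 ≤ k
  hkn : 2 * k ≤ n
  hconvex : ∀ i : ZMod n, v i ∉ convexHull ℝ (v '' {j | j ≠ i})
  hangle1 : ∀ i : ZMod n,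
    EuclideanGeometry.angle (v (i + 1)) (v i) (v (i + (k : ZMod n))) = α
  hangle2 : ∀ i : ZMod n,
    EuclideanGeometry.angle (v (i + (k : ZMod n) - 1)) (v (i + (k : ZMod n))) (v i) = α

/-- The interior angle of the polygon at vertex `v_i`. -/
noncomputable def GutkinPolygon.interiorAngle {n k : ℕ} (P : GutkinPolygon n k) (i : ZMod n) : ℝ :=
  EuclideanGeometry.angle (P.v (i - 1)) (P.v i) (P.v (i + 1))

namespace GutkinAux

open Complex
open scoped RealInnerProductSpace

lemma mulform_re (A c t s : ℝ) : ((A:ℂ) * (↑c + ↑t * ↑s * I)).re = A * c := by simp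
lemma mulform_im (A c t s : ℝ) : ((A:ℂ) * (↑c + ↑t * ↑s * I)).im = A * (t * s) := by simp

lemma key_angle {α : ℝ} (x y : ℂ) (hx : x ≠ 0) (hy : y ≠ 0)
    (h : InnerProductGeometry.angle x y = α) :
    ∃ τ : ℝ, (τ = 1 ∨ τ = -1) ∧
      x * (starRingEnd ℂ) y =
        ((‖x‖ * ‖y‖ : ℝ) : ℂ) *
          (↑(Real.cos α) + ↑τ * ↑(Real.sin α) * I) := by
  set A : ℝ := ‖x‖ * ‖y‖ with hA
  have hApos : 0 < A := mul_pos (norm_pos_iff.mpr hx) (norm_pos_iff.mpr hy)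
  have hre : (x * (starRingEnd ℂ) y).re = A * Real.cos α := by
    have h1 := InnerProductGeometry.cos_angle_mul_norm_mul_norm x y
    rw [h, Complex.inner x y] at h1
    have h2 : (y * (starRingEnd ℂ) x).re = (x * (starRingEnd ℂ) y).re := by
      simp [Complex.mul_re]; try ring
    rw [h2] at h1
    rw [← h1]
    rw [hA]
    ring
  have habs : ‖x * (starRingEnd ℂ) y‖ = A := by
    rw [norm_mul, Complex.norm_conj]
  have h2 : (A * Real.cos α) ^ 2 + (x * (starRingEnd ℂ) y).im ^ 2 = A ^ 2 := by
    rw [← hre, ← habs, Complex.sq_norm, Complex.normSq_apply]; ring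
  have h3 : Real.sin α ^ 2 + Real.cos α ^ 2 = 1 := Real.sin_sq_add_cos_sq α
  have h3' : A ^ 2 * Real.sin α ^ 2 + A ^ 2 * Real.cos α ^ 2 = A ^ 2 := by
    linear_combination A ^ 2 * h3
  have him2 : (x * (starRingEnd ℂ) y).im ^ 2 = (A * Real.sin α) ^ 2 := by
    nlinarith [h2, h3']
  have hfac : ((x * (starRingEnd ℂ) y).im - A * Real.sin α) *
      ((x * (starRingEnd ℂ) y).im + A * Real.sin α) = 0 := by nlinarith [him2]
  rcases mul_eq_zero.1 hfac with h4 | h4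
  · refine ⟨1, Or.inl rfl, ?_⟩
    apply Complex.ext
    · rw [mulform_re]; exact hre
    · rw [mulform_im]; linarith [h4]
  · refine ⟨-1, Or.inr rfl, ?_⟩
    apply Complex.ext
    · rw [mulform_re]; exact hre
    · rw [mulform_im]; linarith [h4]

variable {k : ℕ} (P : GutkinPolygon (2 * k) k)

def u (j : ZMod (2 * k)) : ℂ := P.v (j + (k : ZMod (2 * k))) - P.v j

def e (j : ZMod (2 * k)) : ℂ := P.v (j + 1) - P.v j

noncomputable def d (j : ZMod (2 * k)) : ℝ := ‖u P j‖

noncomputable def l (j : ZMod (2 * k)) : ℝ := ‖e P j‖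

lemma vne {a b : ZMod (2 * k)} (hab : a ≠ b) : P.v a ≠ P.v b := by
  intro h
  exact P.hconvex a (subset_convexHull ℝ _ ⟨b, Ne.symm hab, h.symm⟩)

lemma hncol {a b c : ZMod (2 * k)} (hab : a ≠ b) (hac : a ≠ c) (hbc : b ≠ c) :
    ¬ Collinear ℝ ({P.v a, P.v b, P.v c} : Set ℂ) := by
  intro hcol
  have key : ∀ x y z : ZMod (2 * k), x ≠ y → x ≠ z → Wbtw ℝ (P.v y) (P.v x) (P.v z) → False := by
    intro x y z hxy hxz hw
    have hsub : ({P.v y, P.v z} : Set ℂ) ⊆ P.v '' {j | j ≠ x} := by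
      rintro p (rfl | rfl)
      exacts [⟨y, Ne.symm hxy, rfl⟩, ⟨z, Ne.symm hxz, rfl⟩]
    have : P.v x ∈ convexHull ℝ (P.v '' {j | j ≠ x}) := by
      refine convexHull_mono hsub ?_
      rw [convexHull_pair]
      exact hw.mem_segment
    exact P.hconvex x this
  rcases hcol.wbtw_or_wbtw_or_wbtw with h | h | h
  · exact key b a c hab.symm hbc h
  · exact key c b a hbc.symm hac.symm h
  · exact key a c b hac hab h

lemma hcol3 {a b c : ZMod (2 * k)} {r : ℝ} (h : P.v c - P.v a = r • (P.v b - P.v a)) :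
    Collinear ℝ ({P.v a, P.v b, P.v c} : Set ℂ) := by
  rw [collinear_iff_of_mem (Set.mem_insert _ _)]
  refine ⟨P.v b - P.v a, ?_⟩
  rintro p (rfl | rfl | rfl)
  · exact ⟨0, by simp⟩
  · exact ⟨1, by simp⟩
  · exact ⟨r, by rw [← h]; simp⟩

-- index helpers
lemma natCast_ne_zero (hk : 2 ≤ k) {m : ℕ} (h1 : 0 < m) (h2 : m < 2 * k) :
    (m : ZMod (2 * k)) ≠ 0 := by
  haveI : NeZero (2 * k) := ⟨by omega⟩
  intro h
  rw [ZMod.natCast_eq_zero_iff] at h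
  exact absurd (Nat.le_of_dvd h1 h) (by omega)

lemma one_ne_zero' (hk : 2 ≤ k) : (1 : ZMod (2 * k)) ≠ 0 := by
  have := natCast_ne_zero hk (m := 1) one_pos (by omega)
  simpa using this

lemma two_ne_zero' (hk : 2 ≤ k) : (1 + 1 : ZMod (2 * k)) ≠ 0 := by
  have := natCast_ne_zero hk (m := 2) two_pos (by omega)
  simpa [Nat.cast_ofNat, one_add_one_eq_two] using this

lemma k_ne_zero' (hk : 2 ≤ k) : ((k : ZMod (2 * k))) ≠ 0 :=
  natCast_ne_zero hk (by omega) (by omega)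

lemma kk_zero : ((k : ZMod (2 * k))) + (k : ZMod (2 * k)) = 0 := by
  have : ((k : ZMod (2 * k))) + (k : ZMod (2 * k)) = ((2 * k : ℕ) : ZMod (2 * k)) := by
    push_cast; ring
  rw [this, ZMod.natCast_self]

lemma add_one_ne (hk : 2 ≤ k) (j : ZMod (2 * k)) : j + 1 ≠ j := by
  intro h
  exact one_ne_zero' hk (by rwa [add_eq_left] at h)

lemma add_k_ne (hk : 2 ≤ k) (j : ZMod (2 * k)) : j + (k : ZMod (2 * k)) ≠ j := by
  intro h
  exact k_ne_zero' hk (by rwa [add_eq_left] at h)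

lemma sub_one_ne (hk : 2 ≤ k) (j : ZMod (2 * k)) : j - 1 ≠ j := by
  intro h
  have := congrArg (· + 1) h
  simp only [sub_add_cancel] at this
  exact add_one_ne hk j this.symm

lemma sub_one_ne_add_one (hk : 2 ≤ k) (j : ZMod (2 * k)) : j - 1 ≠ j + 1 := by
  intro h
  have := congrArg (· + 1) h
  simp only [sub_add_cancel] at this
  rw [add_assoc] at this
  have h2 := this.symm
  exact two_ne_zero' hk (by rwa [add_eq_left] at h2)

lemma sub_add_one (j : ZMod (2 * k)) : j - 1 + 1 = j :=
  sub_add_cancel j 1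

lemma u_ne_zero (j : ZMod (2 * k)) : u P j ≠ 0 :=
  sub_ne_zero.mpr (vne P (add_k_ne P.hk j))

lemma e_ne_zero (j : ZMod (2 * k)) : e P j ≠ 0 :=
  sub_ne_zero.mpr (vne P (add_one_ne P.hk j))

lemma d_pos (j : ZMod (2 * k)) : 0 < d P j := norm_pos_iff.mpr (u_ne_zero P j)

lemma l_pos (j : ZMod (2 * k)) : 0 < l P j := norm_pos_iff.mpr (e_ne_zero P j)

lemma exists_sigma (j : ZMod (2 * k)) : ∃ σ : ℝ, (σ = 1 ∨ σ = -1) ∧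
    e P j * (starRingEnd ℂ) (u P j) =
      ((l P j * d P j : ℝ) : ℂ) * (↑(Real.cos P.α) + ↑σ * ↑(Real.sin P.α) * I) ∧
    e P (j - 1) * (starRingEnd ℂ) (u P j) =
      -(((l P (j - 1) * d P j : ℝ) : ℂ) * (↑(Real.cos P.α) - ↑σ * ↑(Real.sin P.α) * I)) := by
  have hang1 : InnerProductGeometry.angle (e P j) (u P j) = P.α := P.hangle1 j
  obtain ⟨τ₁, hτ₁, hx1⟩ := key_angle (e P j) (u P j) (e_ne_zero P j) (u_ne_zero P j) hang1
  have hjkk : j + (k : ZMod (2 * k)) + (k : ZMod (2 * k)) = j := by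
    rw [add_assoc, kk_zero, add_zero]
  have hang2 : InnerProductGeometry.angle (P.v (j - 1) - P.v j) (u P j) = P.α := by
    have h2 := P.hangle2 (j + (k : ZMod (2 * k)))
    rw [hjkk] at h2
    exact h2
  have hne1 : P.v (j - 1) - P.v j ≠ 0 := sub_ne_zero.mpr (vne P (sub_one_ne P.hk j))
  obtain ⟨τ₂, hτ₂, hx2⟩ := key_angle _ _ hne1 (u_ne_zero P j) hang2
  have heneg : P.v (j - 1) - P.v j = -(e P (j - 1)) := by
    rw [e, sub_add_one]; ring
  rw [heneg, norm_neg] at hx2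
  have hl : ∀ x : ZMod (2 * k), ‖e P x‖ = l P x := fun _ => rfl
  have hd : ∀ x : ZMod (2 * k), ‖u P x‖ = d P x := fun _ => rfl
  rw [hl, hd] at hx2
  rw [hl, hd] at hx1
  -- exclude τ₂ = τ₁
  have hτne : τ₂ = -τ₁ := by
    rcases hτ₁ with rfl | rfl <;> rcases hτ₂ with rfl | rfl <;> try norm_num
    all_goals {
      exfalso
      have hprod : (e P j * ((l P (j - 1) : ℝ) : ℂ) + ((l P j : ℝ) : ℂ) * e P (j - 1)) *
          (starRingEnd ℂ) (u P j) = 0 := by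
        push_cast at hx1 hx2
        linear_combination ((l P (j - 1) : ℝ) : ℂ) * hx1 - ((l P j : ℝ) : ℂ) * hx2
      have hcu : (starRingEnd ℂ) (u P j) ≠ 0 := by
        simpa using u_ne_zero P j
      have heq : e P j * ((l P (j - 1) : ℝ) : ℂ) + ((l P j : ℝ) : ℂ) * e P (j - 1) = 0 :=
        by exact (mul_eq_zero.1 hprod).resolve_right hcu
      have hl' : ((l P (j - 1) : ℝ) : ℂ) ≠ 0 := by
        exact_mod_cast ne_of_gt (l_pos P (j - 1))
      have hsmul : P.v (j + 1) - P.v j =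
          (l P j / l P (j - 1) : ℝ) • (P.v (j - 1) - P.v j) := by
        rw [heneg, Complex.real_smul]
        push_cast
        rw [div_mul_eq_mul_div, eq_div_iff hl']
        have he1 : e P j = P.v (j + 1) - P.v j := rfl
        rw [← he1]
        linear_combination heq
      have hcol := hcol3 P (a := j) (b := j - 1) (c := j + 1) hsmul
      exact hncol P (Ne.symm (sub_one_ne P.hk j)) (Ne.symm (add_one_ne P.hk j))
        (sub_one_ne_add_one P.hk j) hcol }
  refine ⟨τ₁, hτ₁, hx1, ?_⟩
  rw [hτne] at hx2
  push_cast at hx2 ⊢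
  linear_combination -hx2

lemma u_flip (j : ZMod (2 * k)) : u P (j + (k : ZMod (2 * k))) = -u P j := by
  show P.v (j + (k : ZMod (2 * k)) + (k : ZMod (2 * k))) - P.v (j + (k : ZMod (2 * k)))
      = -(P.v (j + (k : ZMod (2 * k))) - P.v j)
  rw [add_assoc, kk_zero, add_zero]
  ring

lemma d_per (j : ZMod (2 * k)) : d P (j + (k : ZMod (2 * k))) = d P j := by
  rw [d, d, u_flip, norm_neg]

lemma u_step (j : ZMod (2 * k)) :
    u P (j + 1) = u P j + e P (j + (k : ZMod (2 * k))) - e P j := by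
  simp only [u, e]
  rw [show j + 1 + (k : ZMod (2 * k)) = j + (k : ZMod (2 * k)) + 1 by ring]
  ring

lemma mul_conj_self (z : ℂ) : z * (starRingEnd ℂ) z = ((‖z‖ : ℝ) : ℂ) ^ 2 := by
  rw [Complex.mul_conj, Complex.normSq_eq_norm_sq]
  push_cast
  ring

lemma form2_re (A X Y : ℝ) : ((A:ℂ) * (↑X + ↑Y * I)).re = A * X := by simp

lemma form2_im (A X Y : ℝ) : ((A:ℂ) * (↑X + ↑Y * I)).im = A * Y := by simp

lemma prod_form (a b c s : ℝ) :
    ((c:ℂ) + ↑a * ↑s * I) * ((c:ℂ) + ↑b * ↑s * I)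
      = ↑(c^2 - a*b*s^2) + ↑((a+b)*c*s) * I := by
  apply Complex.ext <;>
    simp only [Complex.add_re, Complex.add_im, Complex.mul_re, Complex.mul_im,
      Complex.ofReal_re, Complex.ofReal_im, Complex.I_re, Complex.I_im] <;> ring

lemma pm_cases {a b : ℝ} (ha : a = 1 ∨ a = -1) (hb : b = 1 ∨ b = -1) :
    a = b ∨ a = -b := by
  rcases ha with rfl | rfl <;> rcases hb with rfl | rfl <;> norm_num

lemma k_ne_one' (hk : 2 ≤ k) : ((k : ZMod (2 * k))) ≠ 1 := by
  intro h
  have h2 : ((k - 1 : ℕ) : ZMod (2 * k)) = 0 := by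
    rw [Nat.cast_sub (by omega)]
    rw [h]
    simp
  exact natCast_ne_zero hk (by omega) (by omega) h2

lemma jkk (j : ZMod (2 * k)) : j + (k : ZMod (2 * k)) + (k : ZMod (2 * k)) = j := by
  rw [add_assoc, kk_zero, add_zero]

lemma eqRI {A B A' B' : ℝ} (h : ((A:ℂ) + ↑B * I) = (↑A' + ↑B' * I)) : A = A' ∧ B = B' := by
  constructor
  · simpa using congrArg Complex.re h
  · simpa using congrArg Complex.im h

set_option maxHeartbeats 2000000 in
theorem main_thm (k : ℕ) (P : GutkinPolygon (2 * k) k) :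
    ∀ i j : ZMod (2 * k),
      dist (P.v i) (P.v (i + (k : ZMod (2 * k)))) =
        dist (P.v j) (P.v (j + (k : ZMod (2 * k)))) := by
  haveI : NeZero (2 * k) := ⟨by have := P.hk; omega⟩
  -- α strictly between 0 and π
  have hα0 : 0 ≤ P.α := by
    rw [← P.hangle1 0]; exact EuclideanGeometry.angle_nonneg _ _ _
  have hαπ : P.α ≤ π := by
    rw [← P.hangle1 0]; exact EuclideanGeometry.angle_le_pi _ _ _
  have hd01 : (0 : ZMod (2 * k)) ≠ 1 := (one_ne_zero' P.hk).symm
  have hd0k : (0 : ZMod (2 * k)) ≠ (k : ZMod (2 * k)) := (k_ne_zero' P.hk).symm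
  have hd1k : (1 : ZMod (2 * k)) ≠ (k : ZMod (2 * k)) := (k_ne_one' P.hk).symm
  have hang0 : InnerProductGeometry.angle (P.v 1 - P.v 0)
      (P.v ((k : ZMod (2 * k))) - P.v 0) = P.α := by
    have := P.hangle1 0
    rw [zero_add, zero_add] at this
    exact this
  have hαne0 : P.α ≠ 0 := by
    intro h
    rw [h, InnerProductGeometry.angle_eq_zero_iff] at hang0
    obtain ⟨-, r, -, hr⟩ := hang0
    exact hncol P hd01 hd0k hd1k (hcol3 P (a := 0) (b := 1) (c := (k : ZMod (2 * k))) hr)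
  have hαneπ : P.α ≠ π := by
    intro h
    rw [h, InnerProductGeometry.angle_eq_pi_iff] at hang0
    obtain ⟨-, r, -, hr⟩ := hang0
    exact hncol P hd01 hd0k hd1k (hcol3 P (a := 0) (b := 1) (c := (k : ZMod (2 * k))) hr)
  -- choose the sign function
  choose σ hσpm hP hQ using exists_sigma P
  set c : ℝ := Real.cos P.α with hc
  set s : ℝ := Real.sin P.α with hs
  have hspos : 0 < s := Real.sin_pos_of_pos_of_lt_pi (lt_of_le_of_ne hα0 (Ne.symm hαne0))
    (lt_of_le_of_ne hαπ hαneπ)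
  have hcs : c ^ 2 + s ^ 2 = 1 := by rw [hc, hs]; exact Real.cos_sq_add_sin_sq P.α
  have hsq : ∀ j, σ j * σ j = 1 := by
    intro j; rcases hσpm j with h | h <;> rw [h] <;> norm_num
  -- the combined step equation
  have hR : ∀ j : ZMod (2 * k), u P (j + 1) * (starRingEnd ℂ) (u P j) =
      -(((d P j * d P (j + 1) : ℝ) : ℂ)) *
        ((↑c + ↑(σ j) * ↑s * I) * (↑c + ↑(σ (j + 1)) * ↑s * I)) := by
    intro j
    have h1 := hP j
    have h2 := hQ (j + 1)
    rw [add_sub_cancel_right] at h2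
    have h2' := congrArg (starRingEnd ℂ) h2
    simp only [map_mul, map_neg, map_add, map_sub, Complex.conj_conj, Complex.conj_ofReal,
      Complex.conj_I, map_one] at h2'
    have hee := mul_conj_self (e P j)
    have hlne : ((l P j : ℝ) : ℂ) ≠ 0 := by
      exact_mod_cast ne_of_gt (l_pos P j)
    apply mul_left_cancel₀ (pow_ne_zero 2 hlne)
    have hl : ‖e P j‖ = l P j := rfl
    rw [hl] at hee
    push_cast at h1 h2' hee ⊢
    linear_combination (-(starRingEnd ℂ (u P j)) * u P (j + 1)) * hee
      + ((starRingEnd ℂ) (e P j) * u P (j + 1)) * h1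
      + (((l P j : ℝ) : ℂ) * ((d P j : ℝ) : ℂ) * (↑c + ↑(σ j) * ↑s * I)) * h2'
  have hL : ∀ j : ZMod (2 * k), u P (j + 1) * (starRingEnd ℂ) (u P j) =
      ((d P j : ℝ) : ℂ) ^ 2
        - ((l P (j + (k : ZMod (2 * k))) * d P j : ℝ) : ℂ)
            * (↑c + ↑(σ (j + (k : ZMod (2 * k)))) * ↑s * I)
        - ((l P j * d P j : ℝ) : ℂ) * (↑c + ↑(σ j) * ↑s * I) := by
    intro j
    have hstep := u_step P j
    have h1 := hP j
    have hk1 := hP (j + (k : ZMod (2 * k)))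
    rw [u_flip] at hk1
    rw [d_per] at hk1
    simp only [map_neg, mul_neg] at hk1
    -- hk1 : e P (j+k) * -(conj (u P j)) = ↑(l (j+k) * d j) * Z(j+k)  (roughly)
    have huu := mul_conj_self (u P j)
    have hd : ‖u P j‖ = d P j := rfl
    rw [hd] at huu
    have hmul := congrArg (· * (starRingEnd ℂ) (u P j)) hstep
    rw [hmul]
    push_cast at h1 hk1 huu ⊢
    linear_combination huu - h1 - hk1
  have hT : ∀ j : ZMod (2 * k),
      -(d P j * d P (j + 1)) * (c^2 - σ j * σ (j + 1) * s^2)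
        = (d P j)^2 - (l P (j + (k : ZMod (2 * k))) * d P j) * c - (l P j * d P j) * c
      ∧ -(d P j * d P (j + 1)) * ((σ j + σ (j + 1)) * c * s)
        = -((l P (j + (k : ZMod (2 * k))) * d P j) * (σ (j + (k : ZMod (2 * k))) * s))
            - (l P j * d P j) * (σ j * s) := by
    intro j
    have h := (hR j).symm.trans (hL j)
    rw [prod_form] at h
    have hL' : -(((d P j * d P (j + 1) : ℝ)) : ℂ) *
        (↑(c^2 - σ j * σ (j + 1) * s^2) + ↑((σ j + σ (j + 1)) * c * s) * I)
        = ↑(-(d P j * d P (j + 1)) * (c^2 - σ j * σ (j + 1) * s^2))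
          + ↑(-(d P j * d P (j + 1)) * ((σ j + σ (j + 1)) * c * s)) * I := by
      push_cast; ring
    have hR' : (((d P j : ℝ)) : ℂ) ^ 2
        - ↑(l P (j + (k : ZMod (2 * k))) * d P j) * (↑c + ↑(σ (j + (k : ZMod (2 * k)))) * ↑s * I)
        - ↑(l P j * d P j) * (↑c + ↑(σ j) * ↑s * I)
        = ↑((d P j)^2 - (l P (j + (k : ZMod (2 * k))) * d P j) * c - (l P j * d P j) * c)
          + ↑(-((l P (j + (k : ZMod (2 * k))) * d P j) * (σ (j + (k : ZMod (2 * k))) * s))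
              - (l P j * d P j) * (σ j * s)) * I := by
      push_cast; ring
    rw [hL', hR'] at h
    exact eqRI h
  have hIm : ∀ j : ZMod (2 * k),
      d P (j + 1) * ((σ j + σ (j + 1)) * c)
        = l P (j + (k : ZMod (2 * k))) * σ (j + (k : ZMod (2 * k))) + l P j * σ j := by
    intro j
    have h := (hT j).2
    apply mul_left_cancel₀ (ne_of_gt (mul_pos (d_pos P j) hspos))
    linear_combination -h
  have hRe : ∀ j : ZMod (2 * k),
      -(d P (j + 1)) * (c^2 - σ j * σ (j + 1) * s^2)
        = d P j - (l P (j + (k : ZMod (2 * k))) + l P j) * c := by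
    intro j
    have h := (hT j).1
    apply mul_left_cancel₀ (ne_of_gt (d_pos P j))
    linear_combination h
  have caseA : ∀ j : ZMod (2 * k), σ (j + 1) = -σ j →
      σ (j + (k : ZMod (2 * k))) = -σ j ∧ l P (j + (k : ZMod (2 * k))) = l P j ∧
        d P j + d P (j + 1) = 2 * l P j * c := by
    intro j hf
    have hi := hIm j
    rw [hf] at hi
    have hi' : l P (j + (k : ZMod (2 * k))) * σ (j + (k : ZMod (2 * k))) + l P j * σ j = 0 := by
      rw [← hi]; ring
    have hσk : σ (j + (k : ZMod (2 * k))) = -σ j := by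
      rcases pm_cases (hσpm (j + (k : ZMod (2 * k)))) (hσpm j) with h | h
      · exfalso
        rw [h] at hi'
        rcases hσpm j with h1 | h1 <;> rw [h1] at hi' <;>
          nlinarith [l_pos P (j + (k : ZMod (2 * k))), l_pos P j]
      · exact h
    have hlk : l P (j + (k : ZMod (2 * k))) = l P j := by
      rw [hσk] at hi'
      rcases hσpm j with h1 | h1 <;> rw [h1] at hi' <;> nlinarith [hi']
    refine ⟨hσk, hlk, ?_⟩
    have hr := hRe j
    rw [hf, hlk] at hr
    linear_combination -hr - (d P (j + 1) * s^2) * hsq j - d P (j + 1) * hcs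
  have caseB : ∀ j : ZMod (2 * k), σ (j + 1) = σ j → σ (j + (k : ZMod (2 * k))) = σ j →
      d P (j + 1) = d P j := by
    intro j h1 h2
    have hi := hIm j
    have hr := hRe j
    rw [h1, h2] at hi
    rw [h1] at hr
    rcases hσpm j with h3 | h3 <;> rw [h3] at hi hr
    · linear_combination hr + c * hi - d P (j + 1) * hcs
    · linear_combination hr - c * hi - d P (j + 1) * hcs
  have caseC : ∀ j : ZMod (2 * k), σ (j + 1) = σ j → σ (j + (k : ZMod (2 * k))) = -σ j →
      c = 0 ∧ d P (j + 1) = d P j := by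
    intro j h1 h2
    have hi := hIm j
    rw [h1, h2] at hi
    have hi2 := hIm (j + (k : ZMod (2 * k)))
    rw [jkk] at hi2
    rw [show j + (k : ZMod (2 * k)) + 1 = j + 1 + (k : ZMod (2 * k)) from by ring] at hi2
    rw [d_per] at hi2
    rw [h2] at hi2
    have hdc : d P (j + 1) * c = 0 := by
      rcases pm_cases (hσpm (j + 1 + (k : ZMod (2 * k)))) (hσpm j) with h4 | h4 <;>
        rw [h4] at hi2 <;> rcases hσpm j with h5 | h5 <;> rw [h5] at hi hi2 <;>
          linarith [hi, hi2]
    have hc0 : c = 0 := by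
      rcases mul_eq_zero.1 hdc with h | h
      · exact absurd h (ne_of_gt (d_pos P (j + 1)))
      · exact h
    refine ⟨hc0, ?_⟩
    have hr := hRe j
    rw [h1] at hr
    have hs1 : s ^ 2 = 1 := by linear_combination hcs - c * hc0
    linear_combination hr - (d P (j + 1) * s^2) * hsq j - d P (j + 1) * hs1
      + (d P (j + 1) * c - (l P (j + (k : ZMod (2 * k))) + l P j)) * hc0
  -- existence of a flip leads to contradiction
  have hflipFalse : ∀ j0 : ZMod (2 * k), σ (j0 + 1) = -σ j0 → False := by
    intro j0 hflip0
    have hcpos : 0 < c := by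
      obtain ⟨-, -, hsum⟩ := caseA j0 hflip0
      have hlc : 0 < l P j0 * c := by nlinarith [d_pos P j0, d_pos P (j0 + 1)]
      rcases mul_pos_iff.1 hlc with ⟨-, h⟩ | ⟨h, -⟩
      · exact h
      · exact absurd (l_pos P j0) (not_lt.2 (le_of_lt h))
    have hprop : ∀ j, σ (j + 1) = -σ j → σ (j + 1 + 1) = -σ (j + 1) := by
      intro j hf
      rcases pm_cases (hσpm (j + 1 + 1)) (hσpm (j + 1)) with hB | hB
      · exfalso
        obtain ⟨hσk, hlk, -⟩ := caseA j hf
        rcases pm_cases (hσpm (j + 1 + (k : ZMod (2 * k)))) (hσpm (j + 1)) with hC | hC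
        · -- non-flip at j+1 with matching sign; then caseC at j+k gives c = 0
          have hcond1 : σ (j + (k : ZMod (2 * k)) + 1) = σ (j + (k : ZMod (2 * k))) := by
            rw [show j + (k : ZMod (2 * k)) + 1 = j + 1 + (k : ZMod (2 * k)) from by ring]
            rw [hC, hf, hσk]
          have hcond2 : σ (j + (k : ZMod (2 * k)) + (k : ZMod (2 * k)))
              = -σ (j + (k : ZMod (2 * k))) := by
            rw [jkk, hσk]; ring
          have := (caseC (j + (k : ZMod (2 * k))) hcond1 hcond2).1
          linarith
        · -- caseC at j+1 gives c = 0
          have := (caseC (j + 1) hB hC).1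
          linarith
      · exact hB
    have hall : ∀ j, σ (j + 1) = -σ j := by
      have hstep : ∀ m : ℕ,
          σ (j0 + ((m : ℕ) : ZMod (2 * k)) + 1) = -σ (j0 + ((m : ℕ) : ZMod (2 * k))) := by
        intro m
        induction m with
        | zero => simpa using hflip0
        | succ p ih =>
          have hcast : (((p + 1 : ℕ)) : ZMod (2 * k)) = ((p : ℕ) : ZMod (2 * k)) + 1 := by
            push_cast; ring
          rw [hcast, ← add_assoc]
          exact hprop _ ih
      intro j
      obtain ⟨m, hm⟩ := ZMod.natCast_zmod_surjective (j - j0)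
      have hj : j0 + ((m : ℕ) : ZMod (2 * k)) = j := by rw [hm]; ring
      rw [← hj]
      exact hstep m
    have hZ : ∀ j, ((c:ℂ) + ↑(σ j) * ↑s * I) * ((c:ℂ) + ↑(σ (j + 1)) * ↑s * I) = 1 := by
      intro j
      rw [hall j, prod_form]
      have h1 : c^2 - σ j * -σ j * s^2 = 1 := by nlinarith [hsq j, hcs]
      have h2 : (σ j + -σ j) * c * s = 0 := by ring
      rw [h1, h2]
      simp
    have hR2 : ∀ j, u P (j + 1) * (starRingEnd ℂ) (u P j)
        = -(((d P j * d P (j + 1) : ℝ)) : ℂ) := by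
      intro j
      rw [hR j, hZ j, mul_one]
    haveI : Nonempty (ZMod (2 * k)) := ⟨0⟩
    have hMain : ∀ m : ℕ,
        u P ((m : ℕ) : ZMod (2 * k)) * (starRingEnd ℂ) (u P 0)
          = ↑((((-1 : ℝ))^m * (d P ((m : ℕ) : ZMod (2 * k)) * d P 0) : ℝ))
        ∧ σ ((m : ℕ) : ZMod (2 * k)) = (-1 : ℝ)^m * σ 0 := by
      intro m
      induction m with
      | zero =>
        constructor
        · have h0 := mul_conj_self (u P 0)
          have hd0 : ‖u P 0‖ = d P 0 := rfl
          rw [hd0] at h0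
          rw [show (((0 : ℕ)) : ZMod (2 * k)) = 0 from by push_cast; ring]
          rw [h0]
          push_cast
          ring
        · rw [show (((0 : ℕ)) : ZMod (2 * k)) = 0 from by push_cast; ring]
          simp
      | succ p ih =>
        obtain ⟨ih1, ih2⟩ := ih
        have hcast : (((p + 1 : ℕ)) : ZMod (2 * k)) = ((p : ℕ) : ZMod (2 * k)) + 1 := by
          push_cast; ring
        constructor
        · rw [hcast]
          have h1 := hR2 ((p : ℕ) : ZMod (2 * k))
          have huu := mul_conj_self (u P ((p : ℕ) : ZMod (2 * k)))
          have hdp : ‖u P ((p : ℕ) : ZMod (2 * k))‖ = d P ((p : ℕ) : ZMod (2 * k)) :=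
            rfl
          rw [hdp] at huu
          have hdne : ((d P ((p : ℕ) : ZMod (2 * k)) : ℝ) : ℂ) ≠ 0 := by
            exact_mod_cast ne_of_gt (d_pos P _)
          apply mul_right_cancel₀ (pow_ne_zero 2 hdne)
          push_cast at ih1 h1 huu ⊢
          linear_combination (u P ((p : ℕ) : ZMod (2 * k)) * (starRingEnd ℂ) (u P 0)) * h1
            + (-(((d P ((p : ℕ) : ZMod (2 * k)) : ℝ) : ℂ))
                * ((d P (((p : ℕ) : ZMod (2 * k)) + 1) : ℝ) : ℂ)) * ih1
            - (u P (((p : ℕ) : ZMod (2 * k)) + 1) * (starRingEnd ℂ) (u P 0)) * huu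
        · rw [hcast, hall, ih2]
          ring
    have hEim : ∀ j, (e P j * (starRingEnd ℂ) (u P 0)).im = l P j * (d P 0 * (σ 0 * s)) := by
      intro j
      obtain ⟨m, hm⟩ := ZMod.natCast_zmod_surjective j
      obtain ⟨hu0, hσ0⟩ := hMain m
      rw [← hm]
      have h1 := hP ((m : ℕ) : ZMod (2 * k))
      have huu := mul_conj_self (u P ((m : ℕ) : ZMod (2 * k)))
      have hdp : ‖u P ((m : ℕ) : ZMod (2 * k))‖ = d P ((m : ℕ) : ZMod (2 * k)) := rfl
      rw [hdp] at huu
      have hdne : ((d P ((m : ℕ) : ZMod (2 * k)) : ℝ) : ℂ) ≠ 0 := by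
        exact_mod_cast ne_of_gt (d_pos P _)
      have heq : e P ((m : ℕ) : ZMod (2 * k)) * (starRingEnd ℂ) (u P 0)
          = ↑(((-1 : ℝ))^m * (l P ((m : ℕ) : ZMod (2 * k)) * d P 0))
              * (↑c + ↑(σ ((m : ℕ) : ZMod (2 * k))) * ↑s * I) := by
        apply mul_right_cancel₀ (pow_ne_zero 2 hdne)
        push_cast at h1 huu hu0 ⊢
        linear_combination (u P ((m : ℕ) : ZMod (2 * k)) * (starRingEnd ℂ) (u P 0)) * h1
          + (((l P ((m : ℕ) : ZMod (2 * k)) : ℝ) : ℂ) * ((d P ((m : ℕ) : ZMod (2 * k)) : ℝ) : ℂ)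
              * (↑c + ↑(σ ((m : ℕ) : ZMod (2 * k))) * ↑s * I)) * hu0
          - (e P ((m : ℕ) : ZMod (2 * k)) * (starRingEnd ℂ) (u P 0)) * huu
      rw [heq, mulform_im, hσ0]
      have hm2 : ((-1 : ℝ))^m * ((-1 : ℝ))^m = 1 := by
        rw [← pow_add]
        exact Even.neg_one_pow ⟨m, rfl⟩
      linear_combination (l P ((m : ℕ) : ZMod (2 * k)) * d P 0 * σ 0 * s) * hm2
    have hsum0 : (∑ j : ZMod (2 * k), e P j) = 0 := by
      have hsplit : ∑ j : ZMod (2 * k), e P j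
          = (∑ j : ZMod (2 * k), P.v (j + 1)) - ∑ j : ZMod (2 * k), P.v j := by
        rw [← Finset.sum_sub_distrib]
        rfl
      have h1 : ∑ j : ZMod (2 * k), P.v (j + 1) = ∑ j : ZMod (2 * k), P.v j :=
        Fintype.sum_equiv (Equiv.addRight (1 : ZMod (2 * k))) _ _ (fun j => rfl)
      rw [hsplit, h1, sub_self]
    have hfin : ((∑ j : ZMod (2 * k), e P j) * (starRingEnd ℂ) (u P 0)).im = 0 := by
      rw [hsum0]; simp
    rw [Finset.sum_mul, Complex.im_sum] at hfin
    have hcong : ∑ j : ZMod (2 * k), (e P j * (starRingEnd ℂ) (u P 0)).im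
        = (∑ j : ZMod (2 * k), l P j) * (d P 0 * (σ 0 * s)) := by
      rw [Finset.sum_mul]
      exact Finset.sum_congr rfl fun j _ => hEim j
    rw [hcong] at hfin
    have hlsum : 0 < ∑ j : ZMod (2 * k), l P j :=
      Finset.sum_pos (fun j _ => l_pos P j) Finset.univ_nonempty
    have hp : 0 < (∑ j : ZMod (2 * k), l P j) * (d P 0 * s) :=
      mul_pos hlsum (mul_pos (d_pos P 0) hspos)
    rcases hσpm 0 with h | h <;> rw [h] at hfin <;> nlinarith [hp, hfin]
  -- no flips, so all consecutive diagonals have equal length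
  have hdd : ∀ j, d P (j + 1) = d P j := by
    intro j
    have hnoflip : σ (j + 1) = σ j := by
      rcases pm_cases (hσpm (j + 1)) (hσpm j) with h | h
      · exact h
      · exact absurd h fun hh => hflipFalse j hh
    rcases pm_cases (hσpm (j + (k : ZMod (2 * k)))) (hσpm j) with h | h
    · exact caseB j hnoflip h
    · exact (caseC j hnoflip h).2
  have hper : ∀ (m : ℕ) (i : ZMod (2 * k)), d P (i + ((m : ℕ) : ZMod (2 * k))) = d P i := by
    intro m
    induction m with
    | zero => intro i; simp
    | succ p ih =>
      intro i
      have hcast : (((p + 1 : ℕ)) : ZMod (2 * k)) = ((p : ℕ) : ZMod (2 * k)) + 1 := by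
        push_cast; ring
      rw [hcast, ← add_assoc, hdd]
      exact ih i
  intro i j
  obtain ⟨m, hm⟩ := ZMod.natCast_zmod_surjective (j - i)
  have hij : i + ((m : ℕ) : ZMod (2 * k)) = j := by rw [hm]; ring
  have hdij : d P i = d P j := by rw [← hij]; exact (hper m i).symm
  rw [dist_comm (P.v i), dist_comm (P.v j), Complex.dist_eq, Complex.dist_eq]
  exact hdij

end GutkinAux

/-- In a Gutkin `(2k,k)`-gon, all main diagonals `v_i v_{i+k}` have equal
length. -/
theorem gutkin_2k_k_diagonals_equal (k : ℕ) (P : GutkinPolygon (2 * k) k) :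
    ∀ i j : ZMod (2 * k),
      dist (P.v i) (P.v (i + (k : ZMod (2 * k)))) =
        dist (P.v j) (P.v (j + (k : ZMod (2 * k)))) := by
  exact GutkinAux.main_thm k P
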